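/- Suppose groups G and G′ both have order v and possess regular Paley-type (v,(v−1)/2,(v−5)/4,(v−1)/4)-PDSs D and D′ respectively. Then the set 𝒟 = {(d, 1) : d ∈ D} ∪ {(d, d′) : d ∈ D, d′ ∈ D′} ∪ {(e, 1) : e ∈ D^c} ∪ {(e, e′) : e ∈ D^c, e′ ∈ D′^c} is a regular Paley-type (v², (v²−1)/2, (v²−5)/4, (v²−1)/4)-PDS in G × G′, where D^c = G − 1 − D and D′^c = G′ − 1 − D′. -/

import Mathlib

open Finset

set_option linter.unusedSectionVars false
set_option maxHeartbeats 1000000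

section MixAux


variable {H : Type*} [Group H] [Fintype H] [DecidableEq H]
variable {H' : Type*} [Group H'] [Fintype H'] [DecidableEq H']

/-- Number of ways to write `x` as `a * b⁻¹` with `a ∈ A`, `b ∈ B`. -/
def mixCnt (A B : Finset H) (x : H) : ℕ :=
  ((A ×ˢ B).filter (fun p => p.1 * p.2⁻¹ = x)).card

lemma mixCnt_union_left (A A' B : Finset H) (h : Disjoint A A') (x : H) :
    mixCnt (A ∪ A') B x = mixCnt A B x + mixCnt A' B x := by
  unfold mixCnt
  rw [union_product, filter_union, card_union_of_disjoint]
  apply Finset.disjoint_filter_filter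
  rw [Finset.disjoint_left]
  intro p hp hp'
  simp only [mem_product] at hp hp'
  exact Finset.disjoint_left.1 h hp.1 hp'.1

lemma mixCnt_union_right (A B B' : Finset H) (h : Disjoint B B') (x : H) :
    mixCnt A (B ∪ B') x = mixCnt A B x + mixCnt A B' x := by
  unfold mixCnt
  rw [product_union, filter_union, card_union_of_disjoint]
  apply Finset.disjoint_filter_filter
  rw [Finset.disjoint_left]
  intro p hp hp'
  simp only [mem_product] at hp hp'
  exact Finset.disjoint_left.1 h hp.2 hp'.2

lemma mixCnt_prod (A B : Finset H) (S T : Finset H') (x : H) (y : H') :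
    mixCnt (A ×ˢ S) (B ×ˢ T) (x, y) = mixCnt A B x * mixCnt S T y := by
  unfold mixCnt
  rw [← Finset.card_product]
  apply Finset.card_nbij' (fun p => ((p.1.1, p.2.1), (p.1.2, p.2.2)))
    (fun p => ((p.1.1, p.2.1), (p.1.2, p.2.2)))
  · intro p hp
    simp only [Finset.mem_coe, mem_filter, mem_product, Prod.ext_iff, Prod.mk_mul_mk, Prod.inv_mk] at hp ⊢
    tauto
  · intro p hp
    simp only [Finset.mem_coe, mem_filter, mem_product, Prod.ext_iff, Prod.mk_mul_mk, Prod.inv_mk] at hp ⊢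
    tauto
  · intro p _; rfl
  · intro p _; rfl

lemma mixCnt_self_one (A : Finset H) : mixCnt A A 1 = A.card := by
  unfold mixCnt
  rw [show (A ×ˢ A).filter (fun p => p.1 * p.2⁻¹ = 1) = A.image (fun a => (a, a)) by
    ext ⟨a, b⟩
    simp only [mem_filter, mem_product, mul_inv_eq_one, mem_image, Prod.ext_iff]
    aesop]
  exact Finset.card_image_of_injective _ (fun a b h => (Prod.ext_iff.1 h).1)

lemma mixCnt_univ_right (A : Finset H) (x : H) : mixCnt A univ x = A.card := by
  unfold mixCnt
  rw [show (A ×ˢ univ).filter (fun p => p.1 * p.2⁻¹ = x) = A.image (fun a => (a, x⁻¹ * a)) by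
    ext ⟨a, b⟩
    simp only [mem_filter, mem_product, mem_univ, and_true, mem_image, Prod.ext_iff]
    constructor
    · rintro ⟨ha, h⟩
      exact ⟨a, ha, rfl, by rw [← h]; group⟩
    · rintro ⟨c, hc, rfl, rfl⟩
      exact ⟨hc, by group⟩]
  exact Finset.card_image_of_injective _ (fun a b h => (Prod.ext_iff.1 h).1)

lemma mixCnt_univ_left (B : Finset H) (x : H) : mixCnt univ B x = B.card := by
  unfold mixCnt
  rw [show (univ ×ˢ B).filter (fun p => p.1 * p.2⁻¹ = x) = B.image (fun b => (x * b, b)) by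
    ext ⟨a, b⟩
    simp only [mem_filter, mem_product, mem_univ, true_and, mem_image, Prod.ext_iff]
    constructor
    · rintro ⟨hb, h⟩
      exact ⟨b, hb, by rw [← h]; group, rfl⟩
    · rintro ⟨c, hc, rfl, rfl⟩
      exact ⟨hc, by group⟩]
  exact Finset.card_image_of_injective _ (fun a b h => (Prod.ext_iff.1 h).2)

lemma mixCnt_one_right (A : Finset H) (x : H) :
    mixCnt A {1} x = if x ∈ A then 1 else 0 := by
  unfold mixCnt
  rw [show (A ×ˢ {1}).filter (fun p => p.1 * p.2⁻¹ = x) = (A.filter (· = x)) ×ˢ {1} by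
    ext ⟨a, b⟩
    simp only [mem_filter, mem_product, mem_singleton]
    constructor
    · rintro ⟨⟨ha, rfl⟩, h⟩
      simp only [inv_one, mul_one] at h
      exact ⟨⟨ha, h⟩, rfl⟩
    · rintro ⟨⟨ha, rfl⟩, rfl⟩
      simp [ha]]
  rw [card_product, card_singleton, mul_one, Finset.filter_eq']
  split <;> simp

lemma mixCnt_one_left (B : Finset H) (x : H) :
    mixCnt {1} B x = if x⁻¹ ∈ B then 1 else 0 := by
  unfold mixCnt
  rw [show ({1} ×ˢ B).filter (fun p => p.1 * p.2⁻¹ = x) = {1} ×ˢ (B.filter (· = x⁻¹)) by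
    ext ⟨a, b⟩
    simp only [mem_filter, mem_product, mem_singleton]
    constructor
    · rintro ⟨⟨rfl, hb⟩, h⟩
      simp only [one_mul] at h
      exact ⟨rfl, hb, by rw [← h]; group⟩
    · rintro ⟨rfl, hb, rfl⟩
      simp [hb]]
  rw [card_product, card_singleton, one_mul, Finset.filter_eq']
  split <;> simp

lemma pdsValues (D : Finset H) (m : ℕ) (hH : Fintype.card H = 4*m+1)
    (h1 : (1:H) ∉ D) (hk : D.card = 2*m) (hinv : ∀ d ∈ D, d⁻¹ ∈ D)
    (hl : ∀ x ∈ D, (mixCnt D D x : ℤ) = (m:ℤ) - 1)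
    (hm : ∀ x : H, x ≠ 1 → x ∉ D → (mixCnt D D x : ℤ) = m) (x : H) :
    ((mixCnt D D x : ℤ) = if x = 1 then 2*(m:ℤ) else if x ∈ D then (m:ℤ)-1 else (m:ℤ)) ∧
    ((mixCnt D (univ \ insert 1 D) x : ℤ) = if x = 1 then 0 else (m:ℤ)) ∧
    ((mixCnt (univ \ insert 1 D) D x : ℤ) = if x = 1 then 0 else (m:ℤ)) ∧
    ((mixCnt (univ \ insert 1 D) (univ \ insert 1 D) x : ℤ) =
      if x = 1 then 2*(m:ℤ) else if x ∈ D then (m:ℤ) else (m:ℤ)-1) := by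
  classical
  set E := (univ \ insert (1:H) D) with hE
  have hd1D : Disjoint ({1} : Finset H) D := by simpa using h1
  have hinsert : insert (1:H) D = {1} ∪ D := Finset.insert_eq 1 D
  have hdIE : Disjoint (({1}:Finset H) ∪ D) E := by
    rw [← hinsert, hE]; exact Finset.disjoint_sdiff
  have hUnion : (({1}:Finset H) ∪ D) ∪ E = univ := by
    rw [← hinsert, hE]; exact Finset.union_sdiff_of_subset (Finset.subset_univ _)
  have hEcard : E.card = 2*m := by
    rw [hE, Finset.card_sdiff_of_subset (Finset.subset_univ _), Finset.card_insert_of_notMem h1,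
      Finset.card_univ, hH, hk]
    omega
  have hdecR : ∀ A : Finset H, mixCnt A {1} x + mixCnt A D x + mixCnt A E x = A.card := by
    intro A
    rw [← mixCnt_univ_right A x, ← hUnion, mixCnt_union_right _ _ _ hdIE]
    rw [mixCnt_union_right _ _ _ hd1D]
  have hdecL : ∀ B : Finset H, mixCnt {1} B x + mixCnt D B x + mixCnt E B x = B.card := by
    intro B
    rw [← mixCnt_univ_left B x, ← hUnion, mixCnt_union_left _ _ _ hdIE]
    rw [mixCnt_union_left _ _ _ hd1D]
  have hxinv : x⁻¹ ∈ D ↔ x ∈ D := ⟨fun h => by simpa using hinv _ h, fun h => hinv _ h⟩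
  have hmemE : ∀ y : H, y ∈ E ↔ (¬ y = 1 ∧ y ∉ D) := by
    intro y; rw [hE]; simp [Finset.mem_sdiff, Finset.mem_insert]
  have hR := hdecR D
  have hL := hdecL D
  have hRE := hdecR E
  rw [mixCnt_one_right] at hR hRE
  rw [mixCnt_one_left] at hL
  rcases eq_or_ne x 1 with rfl | hx1
  · have e0 : mixCnt D D (1:H) = 2*m := by rw [mixCnt_self_one, hk]
    have e1 : mixCnt E E (1:H) = 2*m := by rw [mixCnt_self_one, hEcard]
    have e2 : mixCnt E D (1:H) + mixCnt D E (1:H) = 0 := by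
      simp only [if_neg h1, inv_one] at hR hL
      omega
    simp only [if_pos rfl]
    push_cast
    omega
  · have hREx := hdecL E
    rw [mixCnt_one_left] at hREx
    by_cases hxD : x ∈ D
    · have hm1 : 1 ≤ m := by
        by_contra h
        have : D.card = 0 := by omega
        rw [Finset.card_eq_zero] at this
        simp [this] at hxD
      have e0 : mixCnt D D x = m - 1 := by
        have := hl x hxD; omega
      have hxE : x ∉ E := fun h => ((hmemE x).1 h).2 hxD
      have hxEi : x⁻¹ ∉ E := fun h => ((hmemE _).1 h).2 (hxinv.2 hxD)
      rw [if_pos hxD] at hR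
      rw [if_pos (hxinv.2 hxD)] at hL
      rw [if_neg hxE] at hRE
      rw [if_neg hxEi] at hREx
      have e1 : mixCnt D E x = m := by omega
      have e2 : mixCnt E D x = m := by omega
      have e3 : mixCnt E E x = m := by omega
      simp only [if_neg hx1, if_pos hxD]
      push_cast
      omega
    · have hxE : x ∈ E := (hmemE x).2 ⟨hx1, hxD⟩
      have hxDi : x⁻¹ ∉ D := fun h => hxD (hxinv.1 h)
      have hxEi : x⁻¹ ∈ E := (hmemE _).2 ⟨inv_ne_one.2 hx1, hxDi⟩
      have e0 : mixCnt D D x = m := by have := hm x hx1 hxD; omega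
      have hm1 : 1 ≤ m := by
        have : 1 ≤ E.card := Finset.card_pos.2 ⟨x, hxE⟩
        omega
      rw [if_neg hxD] at hR
      rw [if_neg hxDi] at hL
      rw [if_pos hxE] at hRE
      rw [if_pos hxEi] at hREx
      have e1 : mixCnt D E x = m := by omega
      have e2 : mixCnt E D x = m := by omega
      have e3 : mixCnt E E x = m - 1 := by omega
      simp only [if_neg hx1, if_neg hxD]
      push_cast
      omega

lemma paleySTU (D : Finset H) (m : ℕ) (hH : Fintype.card H = 4*m+1)
    (h1 : (1:H) ∉ D) (hk : D.card = 2*m) (hinv : ∀ d ∈ D, d⁻¹ ∈ D)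
    (hl : ∀ x ∈ D, (mixCnt D D x : ℤ) = (m:ℤ) - 1)
    (hm : ∀ x : H, x ≠ 1 → x ∉ D → (mixCnt D D x : ℤ) = m) (y : H) :
    ((mixCnt (insert 1 D) (insert 1 D) y : ℤ) =
        if y = 1 then 2*(m:ℤ)+1 else if y ∈ D then (m:ℤ)+1 else (m:ℤ)) ∧
    ((mixCnt (insert 1 (univ \ insert 1 D)) (insert 1 (univ \ insert 1 D)) y : ℤ) =
        if y = 1 then 2*(m:ℤ)+1 else if y ∈ D then (m:ℤ) else (m:ℤ)+1) ∧
    ((mixCnt (insert 1 D) (insert 1 (univ \ insert 1 D)) y : ℤ) =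
        if y = 1 then 1 else (m:ℤ)+1) ∧
    ((mixCnt (insert 1 (univ \ insert 1 D)) (insert 1 D) y : ℤ) =
        if y = 1 then 1 else (m:ℤ)+1) := by
  classical
  obtain ⟨hDD, hDE, hED, hEE⟩ := pdsValues D m hH h1 hk hinv hl hm y
  set E := (univ \ insert (1:H) D) with hE
  have h1E : (1:H) ∉ E := by rw [hE]; simp
  have hmemE : ∀ z : H, z ∈ E ↔ (¬ z = 1 ∧ z ∉ D) := by
    intro z; rw [hE]; simp [Finset.mem_sdiff, Finset.mem_insert]
  have hxinv : y⁻¹ ∈ D ↔ y ∈ D := ⟨fun h => by simpa using hinv _ h, fun h => hinv _ h⟩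
  have hd1D : Disjoint ({1} : Finset H) D := by simpa using h1
  have hd1E : Disjoint ({1} : Finset H) E := by simpa using h1E
  have expand : ∀ (P Q R S₂ : Finset H), Disjoint P Q → Disjoint R S₂ →
      mixCnt (P ∪ Q) (R ∪ S₂) y
        = mixCnt P R y + mixCnt P S₂ y + mixCnt Q R y + mixCnt Q S₂ y := by
    intro P Q R S₂ h h'
    rw [mixCnt_union_left _ _ _ h, mixCnt_union_right _ _ _ h', mixCnt_union_right _ _ _ h']
    ring
  have h11 : mixCnt ({1} : Finset H) ({1} : Finset H) y = if y = 1 then 1 else 0 := by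
    rw [mixCnt_one_left]
    simp [inv_eq_one]
  have eSS := expand {1} D {1} D hd1D hd1D
  have eTT := expand {1} E {1} E hd1E hd1E
  have eST := expand {1} D {1} E hd1D hd1E
  have eTS := expand {1} E {1} D hd1E hd1D
  rw [h11, mixCnt_one_left, mixCnt_one_right] at eSS eTT eST eTS
  rw [Finset.insert_eq, Finset.insert_eq 1 E]
  rcases eq_or_ne y 1 with rfl | hy1
  · refine ⟨?_, ?_, ?_, ?_⟩ <;>
      simp only [eSS, eTT, eST, eTS] <;> push_cast <;>
      simp only [hDD, hDE, hED, hEE, inv_one, h1, h1E, if_true, if_false, eq_self_iff_true,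
        ite_true, ite_false] <;>
      simp [h1, h1E] <;> omega
  · by_cases hyD : y ∈ D
    · have hyE : y ∉ E := fun h => ((hmemE y).1 h).2 hyD
      have hyDi : y⁻¹ ∈ D := hxinv.2 hyD
      have hyEi : y⁻¹ ∉ E := fun h => ((hmemE _).1 h).2 hyDi
      refine ⟨?_, ?_, ?_, ?_⟩ <;>
        simp only [eSS, eTT, eST, eTS] <;> push_cast <;>
        simp only [hDD, hDE, hED, hEE] <;>
        simp only [hy1, hyD, hyE, hyEi, hyDi, if_true, if_false, eq_self_iff_true,
          ite_true, ite_false, not_false_iff] <;>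
        simp [hy1, hyD, hyE, hyEi, hyDi] <;> omega
    · have hyE : y ∈ E := (hmemE y).2 ⟨hy1, hyD⟩
      have hyDi : y⁻¹ ∉ D := fun h => hyD (hxinv.1 h)
      have hyEi : y⁻¹ ∈ E := (hmemE _).2 ⟨inv_ne_one.2 hy1, hyDi⟩
      refine ⟨?_, ?_, ?_, ?_⟩ <;>
        simp only [eSS, eTT, eST, eTS] <;> push_cast <;>
        simp only [hDD, hDE, hED, hEE] <;>
        simp only [hy1, hyD, hyE, hyEi, hyDi, if_true, if_false, eq_self_iff_true,
          ite_true, ite_false, not_false_iff] <;>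
        simp [hy1, hyD, hyE, hyEi, hyDi] <;> omega

end MixAux

/-- Number of ways to write `x` as `d₁ * d₂⁻¹` with `d₁, d₂ ∈ D`. -/
def pdsCount {G : Type*} [Group G] [Fintype G] [DecidableEq G] (D : Finset G) (x : G) : ℕ :=
  ((D ×ˢ D).filter (fun p => p.1 * p.2⁻¹ = x)).card

/-- `D` is a regular `(v,k,λ,μ)`-partial difference set in `G`. -/
def IsRegularPDS {G : Type*} [Group G] [Fintype G] [DecidableEq G]
    (D : Finset G) (v k l m : ℤ) : Prop :=
  (Fintype.card G : ℤ) = v ∧ (D.card : ℤ) = k ∧ (1 : G) ∉ D ∧ (∀ d ∈ D, d⁻¹ ∈ D) ∧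
  (∀ x ∈ D, (pdsCount D x : ℤ) = l) ∧
  (∀ x : G, x ≠ 1 → x ∉ D → (pdsCount D x : ℤ) = m)


theorem stmt3 {G G' : Type*} [Group G] [Fintype G] [DecidableEq G]
    [Group G'] [Fintype G'] [DecidableEq G']
    (D : Finset G) (D' : Finset G') (v : ℕ) (hv4 : v % 4 = 1)
    (hD : IsRegularPDS D (v : ℤ) (((v : ℤ) - 1) / 2) (((v : ℤ) - 5) / 4) (((v : ℤ) - 1) / 4))
    (hD' : IsRegularPDS D' (v : ℤ) (((v : ℤ) - 1) / 2) (((v : ℤ) - 5) / 4) (((v : ℤ) - 1) / 4)) :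
    IsRegularPDS
      ((D ×ˢ ({1} : Finset G')) ∪ (D ×ˢ D') ∪
        ((Finset.univ \ insert (1 : G) D) ×ˢ ({1} : Finset G')) ∪
        ((Finset.univ \ insert (1 : G) D) ×ˢ (Finset.univ \ insert (1 : G') D')))
      ((v : ℤ) ^ 2) (((v : ℤ) ^ 2 - 1) / 2) (((v : ℤ) ^ 2 - 5) / 4)
      (((v : ℤ) ^ 2 - 1) / 4) := by
  classical
  obtain ⟨hG, hkD, h1D, hinvD, hlD, hmD⟩ := hD
  obtain ⟨hG', hkD', h1D', hinvD', hlD', hmD'⟩ := hD'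
  set m : ℕ := v / 4 with hm
  have hv : v = 4*m+1 := by omega
  have hvz : (v:ℤ) = 4*(m:ℤ)+1 := by exact_mod_cast congrArg (Nat.cast (R := ℤ)) hv
  have hGc : Fintype.card G = 4*m+1 := by
    have : (Fintype.card G : ℤ) = ((4*m+1 : ℕ) : ℤ) := by rw [hG, hvz]; push_cast; ring
    exact_mod_cast this
  have hG'c : Fintype.card G' = 4*m+1 := by
    have : (Fintype.card G' : ℤ) = ((4*m+1 : ℕ) : ℤ) := by rw [hG', hvz]; push_cast; ring
    exact_mod_cast this
  have hk2 : D.card = 2*m := by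
    have : (D.card : ℤ) = ((2*m : ℕ) : ℤ) := by rw [hkD, hvz]; push_cast; omega
    exact_mod_cast this
  have hk2' : D'.card = 2*m := by
    have : (D'.card : ℤ) = ((2*m : ℕ) : ℤ) := by rw [hkD', hvz]; push_cast; omega
    exact_mod_cast this
  have hlam : ((v:ℤ) - 5)/4 = (m:ℤ) - 1 := by omega
  have hmu : ((v:ℤ) - 1)/4 = (m:ℤ) := by omega
  have hl2 : ∀ x ∈ D, (mixCnt D D x : ℤ) = (m:ℤ) - 1 := fun x hx => by
    rw [← hlam]; exact hlD x hx
  have hm2 : ∀ x : G, x ≠ 1 → x ∉ D → (mixCnt D D x : ℤ) = (m:ℤ) := fun x hx hx' => by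
    rw [← hmu]; exact hmD x hx hx'
  have hl2' : ∀ x ∈ D', (mixCnt D' D' x : ℤ) = (m:ℤ) - 1 := fun x hx => by
    rw [← hlam]; exact hlD' x hx
  have hm2' : ∀ x : G', x ≠ 1 → x ∉ D' → (mixCnt D' D' x : ℤ) = (m:ℤ) := fun x hx hx' => by
    rw [← hmu]; exact hmD' x hx hx'
  -- abbreviations
  set E : Finset G := univ \ insert 1 D with hE
  set E' : Finset G' := univ \ insert 1 D' with hE'
  set S' : Finset G' := insert 1 D' with hS'
  set T' : Finset G' := insert 1 E' with hT'
  have h1E : (1:G) ∉ E := by rw [hE]; simp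
  have h1E' : (1:G') ∉ E' := by rw [hE', hS']; simp
  have hmemE : ∀ z : G, z ∈ E ↔ (¬ z = 1 ∧ z ∉ D) := by
    intro z; rw [hE]; simp [Finset.mem_sdiff, Finset.mem_insert]
  have hmemE' : ∀ z : G', z ∈ E' ↔ (¬ z = 1 ∧ z ∉ D') := by
    intro z; rw [hE', hS']; simp [Finset.mem_sdiff, Finset.mem_insert]
  have hEcard : E.card = 2*m := by
    rw [hE, Finset.card_sdiff_of_subset (Finset.subset_univ _), Finset.card_insert_of_notMem h1D,
      Finset.card_univ, hGc, hk2]; omega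
  have hE'card : E'.card = 2*m := by
    rw [hE', hS', Finset.card_sdiff_of_subset (Finset.subset_univ _), Finset.card_insert_of_notMem h1D',
      Finset.card_univ, hG'c, hk2']; omega
  have hS'card : S'.card = 2*m+1 := by
    rw [hS', Finset.card_insert_of_notMem h1D', hk2']
  have hT'card : T'.card = 2*m+1 := by
    rw [hT', Finset.card_insert_of_notMem h1E', hE'card]
  -- the set rewrite
  have hset : ((D ×ˢ ({1} : Finset G')) ∪ (D ×ˢ D') ∪ (E ×ˢ ({1} : Finset G')) ∪ (E ×ˢ E'))
      = (D ×ˢ S') ∪ (E ×ˢ T') := by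
    rw [hS', hT', Finset.insert_eq, Finset.insert_eq, product_union, product_union]
    ext ⟨a, b⟩
    simp only [mem_union, mem_product, mem_singleton]
    tauto
  have hDEdis : Disjoint D E := by
    rw [Finset.disjoint_left]
    intro a ha ha'
    exact ((hmemE a).1 ha').2 ha
  have hProdDis : Disjoint (D ×ˢ S') (E ×ˢ T') := by
    rw [Finset.disjoint_left]
    rintro ⟨a, b⟩ ha hb
    rw [mem_product] at ha hb
    exact Finset.disjoint_left.1 hDEdis ha.1 hb.1
  -- the key count identity
  have key : ∀ x : G, ∀ y : G',
      pdsCount ((D ×ˢ S') ∪ (E ×ˢ T')) (x, y)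
        = mixCnt D D x * mixCnt S' S' y + mixCnt D E x * mixCnt S' T' y
          + mixCnt E D x * mixCnt T' S' y + mixCnt E E x * mixCnt T' T' y := by
    intro x y
    show mixCnt _ _ (x, y) = _
    rw [mixCnt_union_left _ _ _ hProdDis, mixCnt_union_right _ _ _ hProdDis,
      mixCnt_union_right _ _ _ hProdDis, mixCnt_prod, mixCnt_prod, mixCnt_prod, mixCnt_prod]
    ring
  have valG := pdsValues D m hGc h1D hk2 hinvD hl2 hm2
  have valG' := pdsValues D' m hG'c h1D' hk2' hinvD' hl2' hm2'
  have stuG' := paleySTU D' m hG'c h1D' hk2' hinvD' hl2' hm2'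
  have hΛ : ((v:ℤ)^2 - 5)/4 = 4*(m:ℤ)^2 + 2*(m:ℤ) - 1 := by
    have h5 : (v:ℤ)^2 - 5 = 4*(4*(m:ℤ)^2 + 2*(m:ℤ) - 1) := by rw [hvz]; ring
    rw [h5, Int.mul_ediv_cancel_left _ (by norm_num)]
  have hM : ((v:ℤ)^2 - 1)/4 = 4*(m:ℤ)^2 + 2*(m:ℤ) := by
    have h5 : (v:ℤ)^2 - 1 = 4*(4*(m:ℤ)^2 + 2*(m:ℤ)) := by rw [hvz]; ring
    rw [h5, Int.mul_ediv_cancel_left _ (by norm_num)]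
  refine ⟨?_, ?_, ?_, ?_, ?_, ?_⟩
  · rw [Fintype.card_prod, hGc, hG'c]; push_cast [hvz]; ring
  · rw [hset, Finset.card_union_of_disjoint hProdDis, Finset.card_product,
      Finset.card_product, hk2, hEcard, hS'card, hT'card]
    have h5 : (v:ℤ)^2 - 1 = 2*((2*m*(2*m+1) + 2*m*(2*m+1) : ℕ) : ℤ) := by
      push_cast; rw [hvz]; ring
    rw [h5, Int.mul_ediv_cancel_left _ (by norm_num)]
  · rw [hset]
    intro h
    rw [mem_union, mem_product, mem_product] at h
    rcases h with ⟨h, -⟩ | ⟨h, -⟩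
    · exact h1D h
    · exact h1E h
  · rw [hset]
    have hinvE : ∀ a : G, a ∈ E → a⁻¹ ∈ E := by
      intro a ha
      rw [hmemE] at ha ⊢
      exact ⟨inv_ne_one.2 ha.1, fun h => ha.2 (by simpa using hinvD _ h)⟩
    have hinvE' : ∀ a : G', a ∈ E' → a⁻¹ ∈ E' := by
      intro a ha
      rw [hmemE'] at ha ⊢
      exact ⟨inv_ne_one.2 ha.1, fun h => ha.2 (by simpa using hinvD' _ h)⟩
    have hinvS' : ∀ a : G', a ∈ S' → a⁻¹ ∈ S' := by
      intro a ha
      rw [hS', mem_insert] at ha ⊢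
      rcases ha with rfl | ha
      · left; simp
      · right; exact hinvD' _ ha
    have hinvT' : ∀ a : G', a ∈ T' → a⁻¹ ∈ T' := by
      intro a ha
      rw [hT', mem_insert] at ha ⊢
      rcases ha with rfl | ha
      · left; simp
      · right; exact hinvE' _ ha
    rintro ⟨a, b⟩ hab
    rw [mem_union, mem_product, mem_product] at hab ⊢
    rcases hab with ⟨ha, hb⟩ | ⟨ha, hb⟩
    · exact Or.inl ⟨hinvD a ha, hinvS' b hb⟩
    · exact Or.inr ⟨hinvE a ha, hinvT' b hb⟩
  · rw [hset]
    rintro ⟨x, y⟩ hp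
    rw [show pdsCount ((D ×ˢ S') ∪ (E ×ˢ T')) (x,y)
        = mixCnt D D x * mixCnt S' S' y + mixCnt D E x * mixCnt S' T' y
          + mixCnt E D x * mixCnt T' S' y + mixCnt E E x * mixCnt T' T' y from key x y, hΛ]
    obtain ⟨hDDv, hDEv, hEDv, hEEv⟩ := valG x
    obtain ⟨hSS, hTT, hST, hTS⟩ := stuG' y
    rw [← hS'] at hSS hTT hST hTS
    rw [← hE'] at hTT hST hTS
    rw [← hT'] at hTT hST hTS
    rw [← hE] at hDEv hEDv hEEv
    push_cast
    rw [hDDv, hDEv, hEDv, hEEv, hSS, hTT, hST, hTS]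
    rw [mem_union, mem_product, mem_product] at hp
    rcases hp with ⟨hx, hy⟩ | ⟨hx, hy⟩
    · have hx1 : x ≠ 1 := fun h => h1D (h ▸ hx)
      rw [hS', mem_insert] at hy
      rcases hy with rfl | hy
      · simp only [hx1, hx, if_true, if_false, eq_self_iff_true, ite_true, ite_false,
          not_false_iff]
        simp [hx1, hx]
        ring
      · have hy1 : y ≠ 1 := fun h => h1D' (h ▸ hy)
        simp [hx1, hx, hy1, hy]
        ring
    · have hx1 : x ≠ 1 := fun h => h1E (h ▸ hx)
      have hxD : x ∉ D := ((hmemE x).1 hx).2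
      rw [hT', mem_insert] at hy
      rcases hy with rfl | hy
      · simp [hx1, hxD]
        ring
      · have hy1 : y ≠ 1 := fun h => h1E' (h ▸ hy)
        have hyD' : y ∉ D' := ((hmemE' y).1 hy).2
        simp [hx1, hxD, hy1, hyD']
        ring
  · rw [hset]
    rintro ⟨x, y⟩ hne hp
    rw [show pdsCount ((D ×ˢ S') ∪ (E ×ˢ T')) (x,y)
        = mixCnt D D x * mixCnt S' S' y + mixCnt D E x * mixCnt S' T' y
          + mixCnt E D x * mixCnt T' S' y + mixCnt E E x * mixCnt T' T' y from key x y, hM]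
    obtain ⟨hDDv, hDEv, hEDv, hEEv⟩ := valG x
    obtain ⟨hSS, hTT, hST, hTS⟩ := stuG' y
    rw [← hS'] at hSS hTT hST hTS
    rw [← hE'] at hTT hST hTS
    rw [← hT'] at hTT hST hTS
    rw [← hE] at hDEv hEDv hEEv
    push_cast
    rw [hDDv, hDEv, hEDv, hEEv, hSS, hTT, hST, hTS]
    rw [mem_union, mem_product, mem_product, not_or] at hp
    obtain ⟨hp1, hp2⟩ := hp
    have hyS' : y ∈ S' ↔ (y = 1 ∨ y ∈ D') := by rw [hS', mem_insert]
    have hyT' : y ∈ T' ↔ (y = 1 ∨ (y ≠ 1 ∧ y ∉ D')) := by rw [hT', mem_insert, hmemE']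
    by_cases hx1 : x = 1
    · subst hx1
      have hy1 : y ≠ 1 := by
        intro h; subst h; exact hne rfl
      by_cases hyD : y ∈ D'
      · simp [hy1, hyD, h1D]
        ring
      · simp [hy1, hyD, h1D]
        ring
    · by_cases hxD : x ∈ D
      · have hy1 : y ≠ 1 := by
          intro h; subst h
          exact hp1 ⟨hxD, hyS'.2 (Or.inl rfl)⟩
        have hyD : y ∉ D' := fun h => hp1 ⟨hxD, hyS'.2 (Or.inr h)⟩
        simp [hx1, hxD, hy1, hyD]
        ring
      · have hxE : x ∈ E := (hmemE x).2 ⟨hx1, hxD⟩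
        have hy1 : y ≠ 1 := by
          intro h; subst h
          exact hp2 ⟨hxE, hyT'.2 (Or.inl rfl)⟩
        have hyD : y ∈ D' := by
          by_contra h
          exact hp2 ⟨hxE, hyT'.2 (Or.inr ⟨hy1, h⟩)⟩
        simp [hx1, hxD, hy1, hyD]
        ring
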